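/- Let (𝒪,𝒜,T,e,≼) be a Direct Preference Process, φ: ℋ → 𝒳 a feature map, and (γ_t)_{t=1}^{T−1} nonnegative weights not all zero. The following are equivalent: (i) ≼ embeds via (φ,γ)-frequency into a total convex preorder ≼∘ on Dist(𝒳×𝒜) satisfying interpolation; (ii) there exists r: 𝒳×𝒜 → ℝ such that for all trajectory distributions D, D', D ≼ D' ⟺ 𝔼_D[Σ_{t=1}^{T−1} γ_t r(X_t, A_t)] ≤ 𝔼_{D'}[Σ_{t=1}^{T−1} γ_t r(X_t, A_t)], where (X_t, A_t) is the feature-action pair at time t. -/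

import Mathlib

open Finset

/-- A history: an initial observation together with a list of action-observation pairs. -/
abbrev Hist (O A : Type*) := O × List (A × O)

/-- The length (time index) of a history. -/
def hlen {O A : Type*} (h : Hist O A) : ℕ := h.2.length

/-- Append an action-observation pair to a history. -/
def hext {O A : Type*} (h : Hist O A) (a : A) (o : O) : Hist O A :=
  (h.1, h.2 ++ [(a, o)])

/-- The length-`t` prefix of a history/trajectory. -/
def hpre {O A : Type*} (h : Hist O A) (t : ℕ) : Hist O A := (h.1, h.2.take t)

section DPP

variable {O A : Type*} [Fintype O] [Fintype A] [DecidableEq O] [DecidableEq A]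

/-- The finite set of all length-`T` histories (trajectories). -/
def trajFinset (O A : Type*) [Fintype O] [Fintype A] [DecidableEq O] [DecidableEq A]
    (T : ℕ) : Finset (Hist O A) :=
  Finset.image (fun p : O × (Fin T → A × O) => ((p.1, List.ofFn p.2) : Hist O A))
    Finset.univ

/-- `π` is a policy: a distribution over actions for each history. -/
def IsPolicy (π : Hist O A → A → ℝ) : Prop :=
  ∀ h, (∀ a, 0 ≤ π h a) ∧ ∑ a, π h a = 1

/-- `(ρ0, ρ)` is an environment: an initial observation distribution and
history-dependent transition probabilities. -/
def IsEnv (ρ0 : O → ℝ) (ρ : Hist O A → A → O → ℝ) : Prop :=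
  ((∀ o, 0 ≤ ρ0 o) ∧ ∑ o, ρ0 o = 1) ∧
    ∀ h a, (∀ o, 0 ≤ ρ h a o) ∧ ∑ o, ρ h a o = 1

/-- `Dpi ρ π n h` : the distribution over trajectories induced by starting at `h`
(with `n` steps remaining) and following policy `π` in environment `ρ`. -/
noncomputable def Dpi (ρ : Hist O A → A → O → ℝ) (π : Hist O A → A → ℝ) :
    ℕ → Hist O A → Hist O A → ℝ
  | 0, h, ω => if ω = h then 1 else 0
  | n + 1, h, ω => ∑ a, π h a * ∑ o, ρ h a o * Dpi ρ π n (hext h a o) ω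

/-- `D^π(h)` with horizon `T`. -/
noncomputable def DpiH (T : ℕ) (ρ : Hist O A → A → O → ℝ) (π : Hist O A → A → ℝ)
    (h : Hist O A) : Hist O A → ℝ :=
  Dpi ρ π (T - hlen h) h

/-- `D^π(h · a)` : take action `a` at `h`, then follow `π`. -/
noncomputable def DpiA (T : ℕ) (ρ : Hist O A → A → O → ℝ) (π : Hist O A → A → ℝ)
    (h : Hist O A) (a : A) : Hist O A → ℝ :=
  fun ω => ∑ o, ρ h a o * Dpi ρ π (T - hlen h - 1) (hext h a o) ω

/-- Attainable histories in environment `(ρ0, ρ)`. -/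
inductive Attainable (ρ0 : O → ℝ) (ρ : Hist O A → A → O → ℝ) : Hist O A → Prop
  | base (o : O) : 0 < ρ0 o → Attainable ρ0 ρ (o, ([] : List (A × O)))
  | step (h : Hist O A) (a : A) (o : O) :
      Attainable ρ0 ρ h → 0 < ρ h a o → Attainable ρ0 ρ (hext h a o)

/-- A distribution over trajectories (length-`T` histories). -/
def IsTrajDist (T : ℕ) (D : Hist O A → ℝ) : Prop :=
  (∀ ω, 0 ≤ D ω) ∧ (∀ ω, D ω ≠ 0 → hlen ω = T) ∧
    ∑ ω ∈ trajFinset O A T, D ω = 1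

/-- A distribution over the attainable trajectories `Ω^e`. -/
def IsAttDist (T : ℕ) (ρ0 : O → ℝ) (ρ : Hist O A → A → O → ℝ)
    (D : Hist O A → ℝ) : Prop :=
  IsTrajDist T D ∧ ∀ ω, D ω ≠ 0 → Attainable ρ0 ρ ω

/-- Pointwise convex combination. -/
def mix {X : Type*} (α : ℝ) (A B : X → ℝ) : X → ℝ :=
  fun x => α * A x + (1 - α) * B x

/-- The restriction of `R` to `Dist(Ω^e)` is a total consistent preorder. -/
def RestrTotalConsistentPreorder (T : ℕ) (ρ0 : O → ℝ)
    (ρ : Hist O A → A → O → ℝ) (R : (Hist O A → ℝ) → (Hist O A → ℝ) → Prop) : Prop :=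
  (∀ D, IsAttDist T ρ0 ρ D → R D D) ∧
  (∀ D₁ D₂ D₃, IsAttDist T ρ0 ρ D₁ → IsAttDist T ρ0 ρ D₂ → IsAttDist T ρ0 ρ D₃ →
    R D₁ D₂ → R D₂ D₃ → R D₁ D₃) ∧
  (∀ D₁ D₂, IsAttDist T ρ0 ρ D₁ → IsAttDist T ρ0 ρ D₂ → (R D₁ D₂ ∨ R D₂ D₁)) ∧
  (∀ α : ℝ, 0 < α → α < 1 → ∀ D₁ D₂ D₃, IsAttDist T ρ0 ρ D₁ →
    IsAttDist T ρ0 ρ D₂ → IsAttDist T ρ0 ρ D₃ →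
    R D₁ D₂ → R (mix α D₁ D₃) (mix α D₂ D₃))

/-- `π` is a `≼`-optimal policy. -/
def OptimalPolicy (T : ℕ) (ρ0 : O → ℝ) (ρ : Hist O A → A → O → ℝ)
    (R : (Hist O A → ℝ) → (Hist O A → ℝ) → Prop) (π : Hist O A → A → ℝ) : Prop :=
  ∀ h, Attainable ρ0 ρ h → hlen h ≤ T →
    ∀ π', IsPolicy π' → R (DpiH T ρ π' h) (DpiH T ρ π h)

/-- The optimal action set of policy `π` at history `h`. -/
def OptActions (T : ℕ) (ρ : Hist O A → A → O → ℝ)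
    (R : (Hist O A → ℝ) → (Hist O A → ℝ) → Prop) (π : Hist O A → A → ℝ)
    (h : Hist O A) : Set A :=
  {a | ∀ a', R (DpiA T ρ π h a') (DpiA T ρ π h a)}

end DPP

/-- `p` is a probability mass function on the finite type `Y`. -/
def IsDist {Y : Type*} [Fintype Y] (p : Y → ℝ) : Prop :=
  (∀ y, 0 ≤ p y) ∧ ∑ y, p y = 1

/-- The feature-action pair visited at time `t` along trajectory `ω`. -/
def featAct {O A X : Type*} [Inhabited A] [Inhabited O] (φ : Hist O A → X)
    (ω : Hist O A) (t : ℕ) : X × A :=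
  (φ (hpre ω t), (ω.2.getD t default).1)

/-- `ℙ_D((X_t, A_t) = (x,a))` under trajectory distribution `D`. -/
noncomputable def probFA {O A X : Type*} [Fintype O] [Fintype A] [DecidableEq O]
    [DecidableEq A] [DecidableEq X] [DecidableEq (X × A)] [Inhabited A] [Inhabited O]
    (T : ℕ) (φ : Hist O A → X) (D : Hist O A → ℝ) (t : ℕ) (xa : X × A) : ℝ :=
  ∑ ω ∈ trajFinset O A T, D ω * (if featAct φ ω t = xa then 1 else 0)

/-- The `(φ,γ)`-frequency `f^{(φ,γ)}(·|D)` over feature-action pairs,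
with weights `(γ_t)_{t=1}^{T-1}`. -/
noncomputable def freqFA {O A X : Type*} [Fintype O] [Fintype A] [DecidableEq O]
    [DecidableEq A] [DecidableEq X] [DecidableEq (X × A)] [Inhabited A] [Inhabited O]
    (T : ℕ) (φ : Hist O A → X) (γ : ℕ → ℝ) (D : Hist O A → ℝ) (xa : X × A) : ℝ :=
  (∑ t ∈ Finset.Ico 1 T, γ t)⁻¹ * ∑ t ∈ Finset.Ico 1 T, γ t * probFA T φ D t xa

section VNMaux
variable {Y : Type*} [Fintype Y] [DecidableEq Y]

def δd (y : Y) : Y → ℝ := fun z => if z = y then 1 else 0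

lemma isDist_delta (y : Y) : IsDist (δd y) := by
  constructor
  · intro z; unfold δd; split <;> norm_num
  · simp [δd]

lemma isDist_mix {α : ℝ} (h0 : 0 ≤ α) (h1 : α ≤ 1) {p q : Y → ℝ}
    (hp : IsDist p) (hq : IsDist q) : IsDist (mix α p q) := by
  refine ⟨fun y => ?_, ?_⟩
  · have := hp.1 y; have := hq.1 y; unfold mix; nlinarith
  · simp only [mix]
    rw [Finset.sum_add_distrib, ← Finset.mul_sum, ← Finset.mul_sum, hp.2, hq.2]; ring

lemma mix_self (α : ℝ) (p : Y → ℝ) : mix α p p = p := by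
  funext z; simp [mix]; ring

lemma dist_induction (P : (Y → ℝ) → Prop)
    (hdelta : ∀ y : Y, P (δd y))
    (hmix : ∀ (α : ℝ) (y : Y) (q : Y → ℝ), 0 < α → α < 1 → IsDist q → P q →
      P (mix α (δd y) q)) :
    ∀ p : Y → ℝ, IsDist p → P p := by
  intro p hp
  obtain ⟨n, hn⟩ : ∃ n, (Finset.univ.filter fun y => p y ≠ 0).card = n := ⟨_, rfl⟩
  induction n using Nat.strong_induction_on generalizing p with
  | _ n ih =>
    have hsne : (Finset.univ.filter fun y => p y ≠ 0).Nonempty := by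
      by_contra h
      rw [Finset.not_nonempty_iff_eq_empty] at h
      have : ∀ y, p y = 0 := by
        intro y
        by_contra hy
        have : y ∈ Finset.univ.filter fun y => p y ≠ 0 := by simp [hy]
        simp [h] at this
      have h1 := hp.2
      simp only [this, Finset.sum_const_zero] at h1
      norm_num at h1
    obtain ⟨y₀, hy₀⟩ := hsne
    simp only [Finset.mem_filter, Finset.mem_univ, true_and] at hy₀
    set α := p y₀ with hα
    have hαpos : 0 < α := lt_of_le_of_ne (hp.1 y₀) (Ne.symm hy₀)
    have hrest : ∑ z ∈ Finset.univ.erase y₀, p z = 1 - α := by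
      have := Finset.add_sum_erase Finset.univ p (Finset.mem_univ y₀)
      rw [hp.2] at this; linarith
    have hα1 : α ≤ 1 := by
      have h0 : 0 ≤ ∑ z ∈ Finset.univ.erase y₀, p z :=
        Finset.sum_nonneg fun z _ => hp.1 z
      linarith
    rcases eq_or_lt_of_le hα1 with heq | hlt
    · -- p = δd y₀
      have hz : ∀ z, z ≠ y₀ → p z = 0 := by
        intro z hz
        have h0 : ∑ w ∈ Finset.univ.erase y₀, p w = 0 := by rw [hrest, ← heq]; ring
        have := (Finset.sum_eq_zero_iff_of_nonneg (fun w _ => hp.1 w)).mp h0 z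
          (Finset.mem_erase.mpr ⟨hz, Finset.mem_univ z⟩)
        exact this
      have : p = δd y₀ := by
        funext z; by_cases h : z = y₀
        · subst h; simp [δd, ← heq]; exact hα.symm
        · simp [δd, h, hz z h]
      rw [this]; exact hdelta y₀
    · -- decompose
      set q : Y → ℝ := fun z => (if z = y₀ then 0 else p z) / (1 - α) with hqdef
      have h1α : 0 < 1 - α := by linarith
      have hq : IsDist q := by
        constructor
        · intro z
          apply div_nonneg _ (le_of_lt h1α)
          split
          · exact le_refl 0
          · exact hp.1 z
        · have hsum : (∑ z : Y, (if z = y₀ then 0 else p z)) = 1 - α := by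
            have he : (∑ z : Y, if z = y₀ then 0 else p z)
                = ∑ z ∈ Finset.univ.erase y₀, p z := by
              rw [← Finset.sum_erase (f := fun z => if z = y₀ then 0 else p z)
                (a := y₀) Finset.univ (by simp)]
              exact Finset.sum_congr rfl (fun z hz => if_neg (Finset.mem_erase.mp hz).1)
            rw [he]; exact hrest
          simp only [hqdef, div_eq_mul_inv, ← Finset.sum_mul, hsum]
          field_simp
      have hcard : #(Finset.univ.filter fun y => q y ≠ 0) < n := by
        have hsub : (Finset.univ.filter fun y => q y ≠ 0) ⊆
            (Finset.univ.filter fun y => p y ≠ 0).erase y₀ := by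
          intro z hz
          simp only [Finset.mem_filter, Finset.mem_univ, true_and, hqdef] at hz
          by_cases h : z = y₀
          · simp [h] at hz
          · refine Finset.mem_erase.mpr ⟨h, ?_⟩
            simp only [Finset.mem_filter, Finset.mem_univ, true_and]
            intro hpz
            simp [h, hpz] at hz
        calc #(Finset.univ.filter fun y => q y ≠ 0)
            ≤ #((Finset.univ.filter fun y => p y ≠ 0).erase y₀) := Finset.card_le_card hsub
          _ < #(Finset.univ.filter fun y => p y ≠ 0) := by
              apply Finset.card_erase_lt_of_mem
              simp [hy₀]; exact hy₀
          _ = n := hn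
      have hPq : P q := ih _ hcard q hq rfl
      have hdecomp : p = mix α (δd y₀) q := by
        funext z
        by_cases h : z = y₀
        · subst h; simp [mix, δd, hqdef]; exact hα.symm
        · simp only [mix, δd, hqdef, if_neg h]
          field_simp
          ring
      rw [hdecomp]
      exact hmix α y₀ q hαpos hlt hq hPq

set_option maxHeartbeats 1000000 in
theorem vnm [Nonempty Y] (R₀ : (Y → ℝ) → (Y → ℝ) → Prop)
    (hrefl : ∀ p, IsDist p → R₀ p p)
    (htrans : ∀ p q s, IsDist p → IsDist q → IsDist s → R₀ p q → R₀ q s → R₀ p s)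
    (htot : ∀ p q, IsDist p → IsDist q → (R₀ p q ∨ R₀ q p))
    (hind : ∀ α : ℝ, 0 < α → α < 1 → ∀ p q s, IsDist p → IsDist q → IsDist s →
      (R₀ p q ↔ R₀ (mix α p s) (mix α q s)))
    (hcont : ∀ p q s, IsDist p → IsDist q → IsDist s → R₀ p q → R₀ q s →
      ∃ α : ℝ, 0 ≤ α ∧ α ≤ 1 ∧ R₀ (mix α p s) q ∧ R₀ q (mix α p s)) :
    ∃ u : Y → ℝ, ∀ p q, IsDist p → IsDist q →
      (R₀ p q ↔ ∑ y, p y * u y ≤ ∑ y, q y * u y) := by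
  classical
  -- best and worst vertices
  have key : ∀ s : Finset Y, s.Nonempty → ∃ b ∈ s, ∀ y ∈ s, R₀ (δd y) (δd b) := by
    intro s
    induction s using Finset.induction_on with
    | empty => intro h; simp at h
    | @insert a s ha ih =>
      intro _
      rcases s.eq_empty_or_nonempty with rfl | hs
      · refine ⟨a, by simp, ?_⟩
        intro y hy; simp only [Finset.mem_insert, Finset.notMem_empty, or_false] at hy
        subst hy; exact hrefl _ (isDist_delta _)
      · obtain ⟨b, hbs, hball⟩ := ih hs
        rcases htot (δd a) (δd b) (isDist_delta a) (isDist_delta b) with h | h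
        · refine ⟨b, Finset.mem_insert_of_mem hbs, ?_⟩
          intro y hy; rcases Finset.mem_insert.mp hy with rfl | hy
          · exact h
          · exact hball y hy
        · refine ⟨a, Finset.mem_insert_self a s, ?_⟩
          intro y hy; rcases Finset.mem_insert.mp hy with rfl | hy
          · exact hrefl _ (isDist_delta y)
          · exact htrans _ _ _ (isDist_delta y) (isDist_delta b) (isDist_delta a)
              (hball y hy) h
  have keyw : ∀ s : Finset Y, s.Nonempty → ∃ w ∈ s, ∀ y ∈ s, R₀ (δd w) (δd y) := by
    intro s
    induction s using Finset.induction_on with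
    | empty => intro h; simp at h
    | @insert a s ha ih =>
      intro _
      rcases s.eq_empty_or_nonempty with rfl | hs
      · refine ⟨a, by simp, ?_⟩
        intro y hy; simp only [Finset.mem_insert, Finset.notMem_empty, or_false] at hy
        subst hy; exact hrefl _ (isDist_delta _)
      · obtain ⟨w, hws, hwall⟩ := ih hs
        rcases htot (δd w) (δd a) (isDist_delta w) (isDist_delta a) with h | h
        · refine ⟨w, Finset.mem_insert_of_mem hws, ?_⟩
          intro y hy; rcases Finset.mem_insert.mp hy with rfl | hy
          · exact h
          · exact hwall y hy
        · refine ⟨a, Finset.mem_insert_self a s, ?_⟩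
          intro y hy; rcases Finset.mem_insert.mp hy with rfl | hy
          · exact hrefl _ (isDist_delta y)
          · exact htrans _ _ _ (isDist_delta a) (isDist_delta w) (isDist_delta y) h
              (hwall y hy)
  obtain ⟨b, -, hb⟩ := key Finset.univ Finset.univ_nonempty
  obtain ⟨w, -, hw⟩ := keyw Finset.univ Finset.univ_nonempty
  have hb' : ∀ y : Y, R₀ (δd y) (δd b) := fun y => hb y (Finset.mem_univ y)
  have hw' : ∀ y : Y, R₀ (δd w) (δd y) := fun y => hw y (Finset.mem_univ y)
  -- upper and lower bounds for all dists
  have hub : ∀ p, IsDist p → R₀ p (δd b) := by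
    refine dist_induction _ hb' ?_
    intro α y q hα0 hα1 hq hPq
    have h1 : R₀ (mix α (δd y) q) (mix α (δd b) q) :=
      (hind α hα0 hα1 (δd y) (δd b) q (isDist_delta y) (isDist_delta b) hq).mp (hb' y)
    have h2 : R₀ (mix α (δd b) q) (δd b) := by
      have e1 : mix α (δd b) q = mix (1 - α) q (δd b) := by funext z; simp [mix]; ring
      have e2 : mix (1 - α) (δd b) (δd b) = δd b := mix_self _ _
      have h2' := (hind (1 - α) (by linarith) (by linarith) q (δd b) (δd b) hq
        (isDist_delta b) (isDist_delta b)).mp hPq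
      rw [e2] at h2'
      rw [e1]; exact h2'
    exact htrans _ _ _
      (isDist_mix (le_of_lt hα0) (le_of_lt hα1) (isDist_delta y) hq)
      (isDist_mix (le_of_lt hα0) (le_of_lt hα1) (isDist_delta b) hq)
      (isDist_delta b) h1 h2
  have hlb : ∀ p, IsDist p → R₀ (δd w) p := by
    refine dist_induction _ hw' ?_
    intro α y q hα0 hα1 hq hPq
    have h1 : R₀ (mix α (δd w) q) (mix α (δd y) q) :=
      (hind α hα0 hα1 (δd w) (δd y) q (isDist_delta w) (isDist_delta y) hq).mp (hw' y)
    have h2 : R₀ (δd w) (mix α (δd w) q) := by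
      have e1 : mix α (δd w) q = mix (1 - α) q (δd w) := by funext z; simp [mix]; ring
      have e2 : mix (1 - α) (δd w) (δd w) = δd w := mix_self _ _
      have h2' := (hind (1 - α) (by linarith) (by linarith) (δd w) q (δd w)
        (isDist_delta w) hq (isDist_delta w)).mp hPq
      rw [e2] at h2'
      rw [e1]; exact h2'
    exact htrans _ _ _ (isDist_delta w)
      (isDist_mix (le_of_lt hα0) (le_of_lt hα1) (isDist_delta w) hq)
      (isDist_mix (le_of_lt hα0) (le_of_lt hα1) (isDist_delta y) hq) h2 h1
  by_cases hdeg : R₀ (δd b) (δd w)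
  · -- degenerate case: everything indifferent
    refine ⟨fun _ => 0, ?_⟩
    intro p q hp hq
    simp only [mul_zero, Finset.sum_const_zero, le_refl, iff_true]
    exact htrans _ _ _ hp (isDist_delta b) hq (hub p hp)
      (htrans _ _ _ (isDist_delta b) (isDist_delta w) hq hdeg (hlb q hq))
  · -- nondegenerate case
    have hdm : ∀ t : ℝ, 0 ≤ t → t ≤ 1 → IsDist (mix t (δd b) (δd w)) :=
      fun t h0 h1 => isDist_mix h0 h1 (isDist_delta b) (isDist_delta w)
    have m0 : mix (0:ℝ) (δd b) (δd w) = δd w := by funext z; simp [mix]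
    have m1' : mix (1:ℝ) (δd b) (δd w) = δd b := by funext z; simp [mix]
    -- endpoint strictness
    have hE1 : ∀ t : ℝ, 0 ≤ t → t < 1 → ¬ R₀ (δd b) (mix t (δd b) (δd w)) := by
      intro t ht0 ht1
      rcases eq_or_lt_of_le ht0 with heq | hpos
      · rw [← heq, m0]; exact hdeg
      · have e : mix t (δd b) (δd w) = mix (1 - t) (δd w) (δd b) := by
          funext z; simp [mix]; ring
        have eb : mix (1 - t) (δd b) (δd b) = δd b := mix_self _ _
        intro hcon
        apply hdeg
        have h := (hind (1 - t) (by linarith) (by linarith) (δd b) (δd w) (δd b)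
          (isDist_delta b) (isDist_delta w) (isDist_delta b))
        rw [eb, ← e] at h
        exact h.mpr hcon
    have hE2 : ∀ s : ℝ, 0 < s → s ≤ 1 → ¬ R₀ (mix s (δd b) (δd w)) (δd w) := by
      intro s hs0 hs1
      rcases eq_or_lt_of_le hs1 with heq | hlt
      · rw [heq, m1']; exact hdeg
      · intro hcon
        apply hdeg
        have h := (hind s hs0 hlt (δd b) (δd w) (δd w)
          (isDist_delta b) (isDist_delta w) (isDist_delta w))
        rw [mix_self] at h
        exact h.mpr hcon
    -- weak monotonicity
    have hmon : ∀ t s : ℝ, 0 ≤ t → t ≤ s → s ≤ 1 →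
        R₀ (mix t (δd b) (δd w)) (mix s (δd b) (δd w)) := by
      intro t s ht0 hts hs1
      rcases eq_or_lt_of_le hts with heq | hlt
      · rw [heq]; exact hrefl _ (hdm s (le_trans ht0 hts) hs1)
      · rcases eq_or_lt_of_le hs1 with heq1 | hlt1
        · rw [heq1, m1']; exact hub _ (hdm t ht0 (by linarith))
        · have ht1 : t < 1 := lt_trans hlt hlt1
          set u : ℝ := (s - t) / (1 - t) with hudef
          have hu0 : 0 < u := div_pos (by linarith) (by linarith)
          have hu1 : u < 1 := (div_lt_one (by linarith)).mpr (by linarith)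
          have h1t : (1:ℝ) - t ≠ 0 := by linarith
          have e : mix u (δd b) (mix t (δd b) (δd w)) = mix s (δd b) (δd w) := by
            funext z; simp only [mix, hudef]; field_simp; ring
          have h := hind u hu0 hu1 (mix t (δd b) (δd w)) (δd b) (mix t (δd b) (δd w))
            (hdm t ht0 (le_of_lt ht1)) (isDist_delta b) (hdm t ht0 (le_of_lt ht1))
          rw [mix_self, e] at h
          exact h.mp (hub _ (hdm t ht0 (le_of_lt ht1)))
    -- strict monotonicity
    have hsmon : ∀ t s : ℝ, 0 ≤ t → t < s → s ≤ 1 →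
        ¬ R₀ (mix s (δd b) (δd w)) (mix t (δd b) (δd w)) := by
      intro t s ht0 hts hs1
      have hs0 : 0 < s := lt_of_le_of_lt ht0 hts
      rcases eq_or_lt_of_le ht0 with heq | hpos
      · rw [← heq, m0]; exact hE2 s hs0 hs1
      · set v : ℝ := (s - t) / s with hvdef
        have hv0 : 0 < v := div_pos (by linarith) hs0
        have hv1 : v < 1 := (div_lt_one hs0).mpr (by linarith)
        have hsne : s ≠ 0 := ne_of_gt hs0
        have e : mix v (δd w) (mix s (δd b) (δd w)) = mix t (δd b) (δd w) := by
          funext z; simp only [mix, hvdef]; field_simp; ring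
        have h := hind v hv0 hv1 (mix s (δd b) (δd w)) (δd w) (mix s (δd b) (δd w))
          (hdm s (le_of_lt hs0) hs1) (isDist_delta w) (hdm s (le_of_lt hs0) hs1)
        rw [mix_self, e] at h
        exact fun hcon => hE2 s hs0 hs1 (h.mpr hcon)
    -- uniqueness of calibration
    have huniq : ∀ t s : ℝ, 0 ≤ t → t ≤ 1 → 0 ≤ s → s ≤ 1 →
        R₀ (mix t (δd b) (δd w)) (mix s (δd b) (δd w)) →
        R₀ (mix s (δd b) (δd w)) (mix t (δd b) (δd w)) → t = s := by
      intro t s ht0 ht1 hs0 hs1 h1 h2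
      by_contra hne
      rcases lt_or_gt_of_ne hne with hlt | hgt
      · exact hsmon t s ht0 hlt hs1 h2
      · exact hsmon s t hs0 hgt ht1 h1
    -- calibration
    have hcal : ∀ p, IsDist p → ∃ t, 0 ≤ t ∧ t ≤ 1 ∧
        R₀ (mix t (δd b) (δd w)) p ∧ R₀ p (mix t (δd b) (δd w)) := by
      intro p hp
      obtain ⟨α, h0, h1, hα1, hα2⟩ := hcont (δd w) p (δd b) (isDist_delta w) hp
        (isDist_delta b) (hlb p hp) (hub p hp)
      have e : mix α (δd w) (δd b) = mix (1 - α) (δd b) (δd w) := by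
        funext z; simp [mix]; ring
      rw [e] at hα1 hα2
      exact ⟨1 - α, by linarith, by linarith, hα1, hα2⟩
    choose! U hU0 hU1 hUl hUr using hcal
    -- representation on U
    have rep : ∀ p q, IsDist p → IsDist q → (R₀ p q ↔ U p ≤ U q) := by
      intro p q hp hq
      constructor
      · intro h
        by_contra hcon
        push_neg at hcon
        apply hsmon (U q) (U p) (hU0 q hq) hcon (hU1 p hp)
        exact htrans _ _ _ (hdm _ (hU0 p hp) (hU1 p hp)) hp (hdm _ (hU0 q hq) (hU1 q hq))
          (hUl p hp) (htrans _ _ _ hp hq (hdm _ (hU0 q hq) (hU1 q hq)) h (hUr q hq))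
      · intro h
        have h1 : R₀ (mix (U p) (δd b) (δd w)) (mix (U q) (δd b) (δd w)) :=
          hmon _ _ (hU0 p hp) h (hU1 q hq)
        exact htrans _ _ _ hp (hdm _ (hU0 p hp) (hU1 p hp)) hq (hUr p hp)
          (htrans _ _ _ (hdm _ (hU0 p hp) (hU1 p hp)) (hdm _ (hU0 q hq) (hU1 q hq)) hq
            h1 (hUl q hq))
    -- linearity of U
    have hlin : ∀ (α : ℝ) p q, 0 < α → α < 1 → IsDist p → IsDist q →
        U (mix α p q) = α * U p + (1 - α) * U q := by
      intro α p q hα0 hα1 hp hq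
      have hdp : IsDist (mix (U p) (δd b) (δd w)) := hdm _ (hU0 p hp) (hU1 p hp)
      have hdq : IsDist (mix (U q) (δd b) (δd w)) := hdm _ (hU0 q hq) (hU1 q hq)
      have hdmixpq : IsDist (mix α p q) := isDist_mix (le_of_lt hα0) (le_of_lt hα1) hp hq
      have hd1 : IsDist (mix α (mix (U p) (δd b) (δd w)) q) :=
        isDist_mix (le_of_lt hα0) (le_of_lt hα1) hdp hq
      have hd2 : IsDist (mix α (mix (U p) (δd b) (δd w)) (mix (U q) (δd b) (δd w))) :=
        isDist_mix (le_of_lt hα0) (le_of_lt hα1) hdp hdq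
      have hc0 : 0 ≤ α * U p + (1 - α) * U q := by
        have := hU0 p hp; have := hU0 q hq; nlinarith
      have hc1 : α * U p + (1 - α) * U q ≤ 1 := by
        have := hU1 p hp; have := hU1 q hq; nlinarith
      -- step 1 : mix α p q ~ mix α (m (U p)) q
      have hi1 := hind α hα0 hα1 p (mix (U p) (δd b) (δd w)) q hp hdp hq
      have hi1' := hind α hα0 hα1 (mix (U p) (δd b) (δd w)) p q hdp hp hq
      have s1 : R₀ (mix α p q) (mix α (mix (U p) (δd b) (δd w)) q) :=
        hi1.mp (hUr p hp)
      have s1' : R₀ (mix α (mix (U p) (δd b) (δd w)) q) (mix α p q) :=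
        hi1'.mp (hUl p hp)
      -- step 2 : mix α (m (U p)) q ~ mix α (m (U p)) (m (U q))
      have e1 : mix α (mix (U p) (δd b) (δd w)) q
          = mix (1 - α) q (mix (U p) (δd b) (δd w)) := by
        funext z; simp [mix]; ring
      have e2 : mix α (mix (U p) (δd b) (δd w)) (mix (U q) (δd b) (δd w))
          = mix (1 - α) (mix (U q) (δd b) (δd w)) (mix (U p) (δd b) (δd w)) := by
        funext z; simp [mix]; ring
      have hi2 := hind (1 - α) (by linarith) (by linarith) q
        (mix (U q) (δd b) (δd w)) (mix (U p) (δd b) (δd w)) hq hdq hdp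
      have hi2' := hind (1 - α) (by linarith) (by linarith)
        (mix (U q) (δd b) (δd w)) q (mix (U p) (δd b) (δd w)) hdq hq hdp
      have s2 : R₀ (mix α (mix (U p) (δd b) (δd w)) q)
          (mix α (mix (U p) (δd b) (δd w)) (mix (U q) (δd b) (δd w))) := by
        rw [e1, e2]; exact hi2.mp (hUr q hq)
      have s2' : R₀ (mix α (mix (U p) (δd b) (δd w)) (mix (U q) (δd b) (δd w)))
          (mix α (mix (U p) (δd b) (δd w)) q) := by
        rw [e1, e2]; exact hi2'.mp (hUl q hq)
      have e3 : mix α (mix (U p) (δd b) (δd w)) (mix (U q) (δd b) (δd w))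
          = mix (α * U p + (1 - α) * U q) (δd b) (δd w) := by
        funext z; simp [mix]; ring
      rw [e3] at s2 s2' hd2
      -- combine
      have c1 : R₀ (mix α p q) (mix (α * U p + (1 - α) * U q) (δd b) (δd w)) :=
        htrans _ _ _ hdmixpq hd1 hd2 s1 s2
      have c2 : R₀ (mix (α * U p + (1 - α) * U q) (δd b) (δd w)) (mix α p q) :=
        htrans _ _ _ hd2 hd1 hdmixpq s2' s1'
      apply huniq _ _ (hU0 _ hdmixpq) (hU1 _ hdmixpq) hc0 hc1
      · exact htrans _ _ _ (hdm _ (hU0 _ hdmixpq) (hU1 _ hdmixpq)) hdmixpq hd2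
          (hUl _ hdmixpq) c1
      · exact htrans _ _ _ hd2 hdmixpq (hdm _ (hU0 _ hdmixpq) (hU1 _ hdmixpq))
          c2 (hUr _ hdmixpq)
    -- expected utility identity
    have hEU : ∀ p, IsDist p → U p = ∑ y, p y * U (δd y) := by
      refine dist_induction _ ?_ ?_
      · intro y
        rw [Finset.sum_eq_single y]
        · simp [δd]
        · intro z _ hz; simp [δd, hz]
        · intro h; exact absurd (Finset.mem_univ y) h
      · intro α y q hα0 hα1 hq hPq
        rw [hlin α (δd y) q hα0 hα1 (isDist_delta y) hq]
        have hdel : U (δd y) = ∑ z, δd y z * U (δd z) := by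
          rw [Finset.sum_eq_single y]
          · simp [δd]
          · intro z _ hz; simp [δd, hz]
          · intro h; exact absurd (Finset.mem_univ y) h
        rw [hdel, hPq]
        simp only [mix, add_mul, Finset.sum_add_distrib, Finset.mul_sum, mul_assoc]
    refine ⟨fun y => U (δd y), ?_⟩
    intro p q hp hq
    rw [rep p q hp hq, hEU p hp, hEU q hq]

end VNMaux

section FreqAux
variable {O A X : Type*} [Fintype O] [Fintype A] [Fintype X] [DecidableEq O]
  [DecidableEq A] [DecidableEq X] [Inhabited A] [Inhabited O]

lemma freq_exp (T : ℕ) (φ : Hist O A → X) (γ : ℕ → ℝ) (D : Hist O A → ℝ)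
    (r : X × A → ℝ) :
    ∑ xa : X × A, freqFA T φ γ D xa * r xa =
      (∑ t ∈ Finset.Ico 1 T, γ t)⁻¹ *
        ∑ ω ∈ trajFinset O A T, D ω * ∑ t ∈ Finset.Ico 1 T, γ t * r (featAct φ ω t) := by
  classical
  unfold freqFA probFA
  have step : ∑ xa : X × A, (∑ t ∈ Finset.Ico 1 T, γ t *
        ∑ ω ∈ trajFinset O A T, D ω * (if featAct φ ω t = xa then 1 else 0)) * r xa
      = ∑ ω ∈ trajFinset O A T, D ω * ∑ t ∈ Finset.Ico 1 T, γ t * r (featAct φ ω t) := by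
    have inner : ∀ t, ∀ ω ∈ trajFinset O A T,
        (∑ xa : X × A, γ t * (D ω * (if featAct φ ω t = xa then 1 else 0)) * r xa)
          = D ω * (γ t * r (featAct φ ω t)) := by
      intro t ω _
      rw [Finset.sum_eq_single (featAct φ ω t)]
      · simp; ring
      · intro xa _ hne; simp [Ne.symm hne]
      · intro h; exact absurd (Finset.mem_univ _) h
    calc ∑ xa : X × A, (∑ t ∈ Finset.Ico 1 T, γ t *
            ∑ ω ∈ trajFinset O A T, D ω * (if featAct φ ω t = xa then 1 else 0)) * r xa
        = ∑ xa : X × A, ∑ t ∈ Finset.Ico 1 T, ∑ ω ∈ trajFinset O A T,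
            γ t * (D ω * (if featAct φ ω t = xa then 1 else 0)) * r xa := by
          refine Finset.sum_congr rfl fun xa _ => ?_
          rw [Finset.sum_mul]
          refine Finset.sum_congr rfl fun t _ => ?_
          rw [mul_assoc, Finset.sum_mul, Finset.mul_sum]
          exact Finset.sum_congr rfl fun ω _ => by ring
      _ = ∑ t ∈ Finset.Ico 1 T, ∑ ω ∈ trajFinset O A T, ∑ xa : X × A,
            γ t * (D ω * (if featAct φ ω t = xa then 1 else 0)) * r xa := by
          rw [Finset.sum_comm]
          exact Finset.sum_congr rfl fun t _ => Finset.sum_comm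
      _ = ∑ t ∈ Finset.Ico 1 T, ∑ ω ∈ trajFinset O A T,
            D ω * (γ t * r (featAct φ ω t)) := by
          exact Finset.sum_congr rfl fun t _ => Finset.sum_congr rfl fun ω hω =>
            inner t ω hω
      _ = ∑ ω ∈ trajFinset O A T, D ω * ∑ t ∈ Finset.Ico 1 T, γ t * r (featAct φ ω t) := by
          rw [Finset.sum_comm]
          exact Finset.sum_congr rfl fun ω _ => by rw [Finset.mul_sum]
  rw [← step, Finset.mul_sum]
  exact Finset.sum_congr rfl fun xa _ => by rw [mul_assoc]

lemma freq_isDist (T : ℕ) (φ : Hist O A → X) (γ : ℕ → ℝ) (hγ : ∀ t, 0 ≤ γ t)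
    (hc : 0 < ∑ t ∈ Finset.Ico 1 T, γ t) (D : Hist O A → ℝ) (hD : IsTrajDist T D) :
    IsDist (freqFA T φ γ D) := by
  classical
  constructor
  · intro xa
    unfold freqFA probFA
    apply mul_nonneg (inv_nonneg.mpr (le_of_lt hc))
    apply Finset.sum_nonneg
    intro t _
    apply mul_nonneg (hγ t)
    apply Finset.sum_nonneg
    intro ω _
    apply mul_nonneg (hD.1 ω)
    split <;> norm_num
  · have := freq_exp T φ γ D (fun _ => (1 : ℝ))
    simp only [mul_one] at this
    rw [this]
    have hsum : ∑ ω ∈ trajFinset O A T, D ω * ∑ t ∈ Finset.Ico 1 T, γ t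
        = ∑ t ∈ Finset.Ico 1 T, γ t := by
      rw [← Finset.sum_mul, hD.2.2, one_mul]
    rw [hsum, inv_mul_cancel₀ (ne_of_gt hc)]

end FreqAux

/-- `≼` embeds via `(φ,γ)`-frequency into a total convex preorder
satisfying interpolation iff it is expressed by a `γ`-weighted feature-action
(Markov) reward. -/
theorem freq_embedding_iff_markov_reward {O A X : Type*} [Fintype O] [Fintype A]
    [Fintype X] [DecidableEq O] [DecidableEq A] [DecidableEq X]
    [Inhabited A] [Inhabited O] [Nonempty X]
    (T : ℕ) (ρ0 : O → ℝ) (ρ : Hist O A → A → O → ℝ) (henv : IsEnv ρ0 ρ)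
    (R : (Hist O A → ℝ) → (Hist O A → ℝ) → Prop)
    (φ : Hist O A → X) (γ : ℕ → ℝ) (hγ : ∀ t, 0 ≤ γ t)
    (hγne : ∃ t ∈ Finset.Ico 1 T, γ t ≠ 0) :
    (∃ R₀ : ((X × A) → ℝ) → ((X × A) → ℝ) → Prop,
      ((∀ p, IsDist p → R₀ p p) ∧
       (∀ p q s, IsDist p → IsDist q → IsDist s → R₀ p q → R₀ q s → R₀ p s) ∧
       (∀ p q, IsDist p → IsDist q → (R₀ p q ∨ R₀ q p)) ∧
       (∀ α : ℝ, 0 < α → α < 1 → ∀ p q s, IsDist p → IsDist q → IsDist s →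
         (R₀ p q ↔ R₀ (mix α p s) (mix α q s))) ∧
       (∀ p q s, IsDist p → IsDist q → IsDist s → R₀ p q → R₀ q s →
         ∃ α : ℝ, 0 ≤ α ∧ α ≤ 1 ∧ R₀ (mix α p s) q ∧ R₀ q (mix α p s))) ∧
      (∀ D D' : Hist O A → ℝ, IsTrajDist T D → IsTrajDist T D' →
        (R D D' ↔ R₀ (freqFA T φ γ D) (freqFA T φ γ D'))))
    ↔
    (∃ r : X × A → ℝ,
      ∀ D D' : Hist O A → ℝ, IsTrajDist T D → IsTrajDist T D' →
        (R D D' ↔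
          (∑ ω ∈ trajFinset O A T, D ω *
              ∑ t ∈ Finset.Ico 1 T, γ t * r (featAct φ ω t)) ≤
          (∑ ω ∈ trajFinset O A T, D' ω *
              ∑ t ∈ Finset.Ico 1 T, γ t * r (featAct φ ω t)))) := by
  classical
  have hc : 0 < ∑ t ∈ Finset.Ico 1 T, γ t := by
    obtain ⟨t, ht, hne⟩ := hγne
    exact Finset.sum_pos' (fun i _ => hγ i) ⟨t, ht, lt_of_le_of_ne (hγ t) (Ne.symm hne)⟩
  constructor
  · rintro ⟨R₀, ⟨h1, h2, h3, h4, h5⟩, hemb⟩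
    obtain ⟨u, hu⟩ := vnm R₀ h1 h2 h3 h4 h5
    refine ⟨u, ?_⟩
    intro D D' hD hD'
    rw [hemb D D' hD hD',
      hu _ _ (freq_isDist T φ γ hγ hc D hD) (freq_isDist T φ γ hγ hc D' hD'),
      freq_exp, freq_exp]
    exact mul_le_mul_iff_right₀ (inv_pos.mpr hc)
  · rintro ⟨r, hr⟩
    set E : ((X × A) → ℝ) → ℝ := fun p => ∑ y, p y * r y with hE
    have Emix : ∀ (α : ℝ) (p q : (X × A) → ℝ), E (mix α p q) = α * E p + (1 - α) * E q := by
      intro α p q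
      simp only [hE, mix, add_mul, Finset.sum_add_distrib, Finset.mul_sum, mul_assoc]
    refine ⟨fun p q => E p ≤ E q, ⟨?_, ?_, ?_, ?_, ?_⟩, ?_⟩
    · intro p _; exact le_refl _
    · intro p q s _ _ _ hpq hqs; exact le_trans hpq hqs
    · intro p q _ _; exact le_total _ _
    · intro α hα0 hα1 p q s _ _ _
      simp only [Emix]
      constructor
      · intro h
        have := mul_le_mul_of_nonneg_left h (le_of_lt hα0)
        linarith
      · intro h
        by_contra hcon
        push_neg at hcon
        have := mul_lt_mul_of_pos_left hcon hα0
        linarith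
    · intro p q s _ _ _ h1 h2
      by_cases hps : E s - E p = 0
      · refine ⟨0, le_refl 0, by norm_num, ?_, ?_⟩ <;> simp only [Emix] <;> linarith
      · have hlt : 0 < E s - E p := lt_of_le_of_ne (by linarith) (Ne.symm hps)
        refine ⟨(E s - E q) / (E s - E p), div_nonneg (by linarith) (le_of_lt hlt),
          (div_le_one hlt).mpr (by linarith), ?_, ?_⟩ <;> simp only [Emix] <;>
          [skip; skip] <;>
        · have key : (E s - E q) / (E s - E p) * E p +
              (1 - (E s - E q) / (E s - E p)) * E s = E q := by
            field_simp
            ring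
          linarith
    · intro D D' hD hD'
      rw [hr D D' hD hD']
      have e1 := freq_exp T φ γ D r
      have e2 := freq_exp T φ γ D' r
      simp only [hE]
      rw [e1, e2]
      exact (mul_le_mul_iff_right₀ (inv_pos.mpr hc)).symm
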